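/- Let k ≥ 1, let a < b be real numbers, and let α : [a,b] → ℝ^k be a continuous unit-valued path that is not constant. Then there exist s ∈ [a,b] and a nonzero β ∈ ℚ^k with ∑_{i=1}^k β_i α_i(s) = 0; equivalently, the function D_α(s) = dim_ℚ {β ∈ ℚ^k : ∑_{i=1}^k β_i α_i(s) = 0} satisfies D_α(s) ≥ 1 at some point s ∈ [a,b]. -/

import Mathlib

/-- A continuous nonconstant unit-valued path `α : [a,b] → ℝ^k` admits a point `s` at
which the coordinates of `α s` satisfy a nontrivial rational linear relation. -/
theorem exists_nontrivial_rational_relation_of_nonconstant_unit_path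
    (k : ℕ) (hk : 1 ≤ k) (a b : ℝ) (hab : a < b)
    (α : ℝ → EuclideanSpace ℝ (Fin k))
    (hcont : ContinuousOn α (Set.Icc a b))
    (hunit : ∀ s ∈ Set.Icc a b, ‖α s‖ = 1)
    (hnc : ¬ ∀ s ∈ Set.Icc a b, ∀ s' ∈ Set.Icc a b, α s = α s') :
    ∃ s ∈ Set.Icc a b, ∃ β : Fin k → ℚ, β ≠ 0 ∧ ∑ i, (β i : ℝ) * α s i = 0 := by
  classical
  set i0 : Fin k := ⟨0, hk⟩ with hi0
  have hcoord : ∀ j : Fin k, ContinuousOn (fun s => α s j) (Set.Icc a b) :=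
    fun j => (continuous_apply j).comp_continuousOn ((PiLp.continuous_ofLp 2 _).comp_continuousOn hcont)
  by_cases h0 : ∃ s ∈ Set.Icc a b, α s i0 = 0
  · obtain ⟨s, hs, hz⟩ := h0
    refine ⟨s, hs, Pi.single i0 1, ?_, ?_⟩
    · intro h
      have := congrFun h i0
      simp [Pi.single_apply] at this
    · have h1 : ∀ i ∈ Finset.univ, ((Pi.single i0 (1:ℚ) : Fin k → ℚ) i : ℝ) * α s i =
          if i = i0 then α s i0 else 0 := by
        intro i _
        rcases eq_or_ne i i0 with h | h
        · subst h; simp [Pi.single_apply]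
        · simp [Pi.single_apply, h]
      rw [Finset.sum_congr rfl h1]
      simp [hz]
  · push_neg at h0
    by_cases hr : ∃ j : Fin k, ∃ s ∈ Set.Icc a b, ∃ s' ∈ Set.Icc a b,
        α s j / α s i0 ≠ α s' j / α s' i0
    · obtain ⟨j, s, hs, s', hs', hne⟩ := hr
      have hji0 : j ≠ i0 := by
        intro h; subst h
        exact hne (by rw [div_self (h0 s hs), div_self (h0 s' hs')])
      have hsub : Set.uIcc s s' ⊆ Set.Icc a b := Set.uIcc_subset_Icc hs hs'
      have hrc : ContinuousOn (fun t => α t j / α t i0) (Set.uIcc s s') :=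
        (((hcoord j).div (hcoord i0)) (fun t ht => h0 t ht)).mono hsub
      set u := α s j / α s i0
      set v := α s' j / α s' i0
      obtain ⟨q, hq1, hq2⟩ := exists_rat_btwn (min_lt_max.2 hne)
      have hqmem : (q : ℝ) ∈ Set.uIcc u v := ⟨hq1.le, hq2.le⟩
      obtain ⟨t, ht, hqt⟩ := intermediate_value_uIcc hrc hqmem
      have htab : t ∈ Set.Icc a b := hsub ht
      have hαt : α t j = q * α t i0 := by
        have := h0 t htab
        field_simp at hqt
        linarith [hqt]
      refine ⟨t, htab, Pi.single i0 q - Pi.single j 1, ?_, ?_⟩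
      · intro h
        have := congrFun h j
        simp [Pi.single_apply, hji0, Ne.symm hji0] at this
      · have h1 : ∀ i ∈ Finset.univ,
            (((Pi.single i0 q - Pi.single j 1 : Fin k → ℚ)) i : ℝ) * α t i =
            (if i = i0 then (q : ℝ) * α t i0 else 0) - (if i = j then α t j else 0) := by
          intro i _
          rcases eq_or_ne i i0 with h | h
          · subst h; simp [Pi.single_apply, Ne.symm hji0, sub_mul]
          · rcases eq_or_ne i j with h' | h'
            · subst h'; simp [Pi.single_apply, h, sub_mul]
            · simp [Pi.single_apply, h, h', sub_mul]
        rw [Finset.sum_congr rfl h1, Finset.sum_sub_distrib]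
        simp [hαt]
    · push_neg at hr
      exfalso
      apply hnc
      intro s hs s' hs'
      -- sign of α · i0 is constant
      have hsign : 0 < α s i0 * α s' i0 := by
        rcases lt_trichotomy (α s i0 * α s' i0) 0 with h | h | h
        · exfalso
          have h0mem : (0:ℝ) ∈ Set.uIcc (α s i0) (α s' i0) := by
            rcases mul_neg_iff.1 h with ⟨h1, h2⟩ | ⟨h1, h2⟩
            · exact Set.mem_uIcc.2 (Or.inr ⟨h2.le, h1.le⟩)
            · exact Set.mem_uIcc.2 (Or.inl ⟨h1.le, h2.le⟩)
          have hsub : Set.uIcc s s' ⊆ Set.Icc a b := Set.uIcc_subset_Icc hs hs'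
          obtain ⟨t, ht, hzt⟩ := intermediate_value_uIcc
            (((hcoord i0).mono hsub)) h0mem
          exact h0 t (hsub ht) hzt
        · exact absurd h (mul_ne_zero (h0 s hs) (h0 s' hs'))
        · exact h
      set c := α s i0 / α s' i0 with hc
      have hcpos : 0 < c := div_pos_iff.2 (by
        rcases mul_pos_iff.1 hsign with ⟨h1, h2⟩ | ⟨h1, h2⟩
        · exact Or.inl ⟨h1, h2⟩
        · exact Or.inr ⟨h1, h2⟩)
      have hprop : ∀ j : Fin k, α s j = c * α s' j := by
        intro j
        have h := hr j s hs s' hs'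
        have hs0 := h0 s hs
        have hs'0 := h0 s' hs'
        rw [div_eq_div_iff hs0 hs'0] at h
        rw [hc, div_mul_eq_mul_div, eq_div_iff hs'0]
        linarith [h]
      have heq : α s = c • α s' := by
        ext j
        simpa using hprop j
      have hnorm : ‖α s‖ = |c| * ‖α s'‖ := by
        rw [heq, norm_smul, Real.norm_eq_abs]
      rw [hunit s hs, hunit s' hs'] at hnorm
      have hc1 : c = 1 := by
        rw [abs_of_pos hcpos] at hnorm
        linarith
      rw [heq, hc1, one_smul]
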